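/- Let p ≥ 2 and let H be the complete bipartite graph K_{2,p}. Then q₁(H) + q₂(H) = 2p + 2 > 2p + 1 = d₁(H) + d₂(H) + 1, where q₁(H) ≥ q₂(H) are the two largest eigenvalues (with multiplicity) of the signless Laplacian Q(H) and d₁(H) ≥ d₂(H) are the two largest vertex degrees of H. -/

import Mathlib

open Matrix

/-- The signless Laplacian matrix `Q(G) = D + A` of a simple graph, over `ℝ`. -/
def sLapMatrix {m : ℕ} (G : SimpleGraph (Fin m)) [DecidableRel G.Adj] :
    Matrix (Fin m) (Fin m) ℝ :=
  G.degMatrix ℝ + G.adjMatrix ℝ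

/-- `q` lists the eigenvalues of `A` (with multiplicity) in non-increasing order. -/
def IsEigSeq {m : ℕ} (A : Matrix (Fin m) (Fin m) ℝ) (q : Fin m → ℝ) : Prop :=
  Antitone q ∧ ∃ (hA : A.IsHermitian) (σ : Equiv.Perm (Fin m)),
    ∀ i, q i = hA.eigenvalues (σ i)

/-- `d` lists the degrees of `G` (with multiplicity) in non-increasing order. -/
def IsDegSeq {m : ℕ} (G : SimpleGraph (Fin m)) [DecidableRel G.Adj] (d : Fin m → ℕ) : Prop :=
  Antitone d ∧ ∃ σ : Equiv.Perm (Fin m), ∀ i, d i = G.degree (σ i)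

/-- The complete bipartite graph `K_{2,p}` on `p + 2` vertices: the part of size `2` is
`{0, 1}` and the part of size `p` is the set of the remaining vertices. -/
def K2p (p : ℕ) : SimpleGraph (Fin (p + 2)) where
  Adj a b := (a.val ≤ 1 ∧ 2 ≤ b.val) ∨ (b.val ≤ 1 ∧ 2 ≤ a.val)
  symm := ⟨by intro a b h; tauto⟩
  loopless := ⟨by intro a h; rcases h with ⟨h1, h2⟩ | ⟨h1, h2⟩ <;> omega⟩

instance K2p.adjDecidable (p : ℕ) : DecidableRel (K2p p).Adj := fun a b =>
  inferInstanceAs (Decidable ((a.val ≤ 1 ∧ 2 ≤ b.val) ∨ (b.val ≤ 1 ∧ 2 ≤ a.val)))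

namespace K2B

/-! ### Generic linear-algebra helper lemmas -/

lemma vmv_mul_vmv {n : Type*} [Fintype n] (a b c d : n → ℝ) :
    vecMulVec a b * vecMulVec c d = (b ⬝ᵥ c) • vecMulVec a d := by
  ext i j
  simp only [mul_apply, vecMulVec_apply, Matrix.smul_apply, dotProduct, smul_eq_mul, Finset.sum_mul]
  exact Finset.sum_congr rfl fun k _ => by ring

lemma vmv_mulVec {n : Type*} [Fintype n] (a b x : n → ℝ) :
    vecMulVec a b *ᵥ x = (b ⬝ᵥ x) • a := by
  funext i
  simp only [mulVec, vecMulVec_apply, dotProduct, Pi.smul_apply, smul_eq_mul, Finset.sum_mul]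
  exact Finset.sum_congr rfl fun k _ => by ring

lemma vmv_conjT {n : Type*} (a b : n → ℝ) : (vecMulVec a b)ᴴ = vecMulVec b a := by
  ext i j
  simp [conjTranspose_apply, vecMulVec_apply, mul_comm]

lemma trace_vmv {n : Type*} [Fintype n] (a b : n → ℝ) :
    (vecMulVec a b).trace = a ⬝ᵥ b := by
  simp [Matrix.trace, Matrix.diag, vecMulVec_apply, dotProduct]

lemma exists_eig_index {n : ℕ} {A : Matrix (Fin n) (Fin n) ℝ} (hA : A.IsHermitian)
    {c : ℝ} {x : Fin n → ℝ} (hx : x ≠ 0) (hAx : A *ᵥ x = c • x) :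
    ∃ i, hA.eigenvalues i = c := by
  by_contra hcon
  push_neg at hcon
  set U : Matrix (Fin n) (Fin n) ℝ := (hA.eigenvectorUnitary : Matrix (Fin n) (Fin n) ℝ) with hU
  have hsU : star U * U = 1 := Unitary.coe_star_mul_self hA.eigenvectorUnitary
  have hUs : U * star U = 1 := Unitary.coe_mul_star_self hA.eigenvectorUnitary
  have hspec : A = U * diagonal (RCLike.ofReal ∘ hA.eigenvalues) * star U := hA.spectral_theorem
  set y : Fin n → ℝ := star U *ᵥ x with hy
  have key : diagonal (RCLike.ofReal ∘ hA.eigenvalues) *ᵥ y = c • y := by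
    have h1 : star U *ᵥ (A *ᵥ x) = (star U * A) *ᵥ x := by rw [mulVec_mulVec]
    have h2 : star U * A = diagonal (RCLike.ofReal ∘ hA.eigenvalues) * star U := by
      conv_lhs => rw [hspec]
      rw [← Matrix.mul_assoc, ← Matrix.mul_assoc, hsU, Matrix.one_mul]
    rw [hAx, mulVec_smul] at h1
    rw [h2, ← mulVec_mulVec] at h1
    exact h1.symm
  have hy0 : y = 0 := by
    funext i
    have := congrFun key i
    rw [mulVec_diagonal] at this
    simp only [Function.comp_apply, RCLike.ofReal_real_eq_id, id_eq, Pi.smul_apply,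
      smul_eq_mul] at this
    have hne : hA.eigenvalues i - c ≠ 0 := sub_ne_zero_of_ne (hcon i)
    have : (hA.eigenvalues i - c) * y i = 0 := by ring_nf; ring_nf at this; linarith [this]
    rcases mul_eq_zero.mp this with h | h
    · exact absurd h hne
    · simpa using h
  apply hx
  have : x = U *ᵥ y := by rw [hy, mulVec_mulVec, hUs, one_mulVec]
  rw [this, hy0, mulVec_zero]

lemma sum_sq_eigenvalues {n : ℕ} {A : Matrix (Fin n) (Fin n) ℝ} (hA : A.IsHermitian) :
    ∑ i, hA.eigenvalues i ^ 2 = (A * A).trace := by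
  set U : Matrix (Fin n) (Fin n) ℝ := (hA.eigenvectorUnitary : Matrix (Fin n) (Fin n) ℝ) with hU
  have hsU : star U * U = 1 := Unitary.coe_star_mul_self hA.eigenvectorUnitary
  set D : Matrix (Fin n) (Fin n) ℝ := diagonal (RCLike.ofReal ∘ hA.eigenvalues) with hD
  have hspec : A = U * D * star U := hA.spectral_theorem
  have hAA : A * A = U * (D * D) * star U := by
    conv_lhs => rw [hspec]
    calc U * D * star U * (U * D * star U) = U * D * (star U * U) * D * star U := by
          simp only [Matrix.mul_assoc]
      _ = U * (D * D) * star U := by rw [hsU]; simp only [Matrix.mul_one, Matrix.mul_assoc]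
  rw [hAA, Matrix.trace_mul_cycle, ← Matrix.mul_assoc, hsU, Matrix.one_mul]
  rw [hD, diagonal_mul_diagonal, trace_diagonal]
  simp [sq]

/-! ### The indicator vectors of the two parts -/

variable {p : ℕ}

def uvec (p : ℕ) : Fin (p + 2) → ℝ := fun i => if i.val ≤ 1 then 1 else 0
def wvec (p : ℕ) : Fin (p + 2) → ℝ := fun i => if i.val ≤ 1 then 0 else 1

lemma card_le1 : (Finset.univ.filter (fun i : Fin (p + 2) => i.val ≤ 1)).card = 2 := by
  have h : (Finset.univ.filter (fun i : Fin (p + 2) => i.val ≤ 1)) =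
      {(⟨0, by omega⟩ : Fin (p + 2)), ⟨1, by omega⟩} := by
    ext i
    simp only [Finset.mem_filter, Finset.mem_univ, true_and, Finset.mem_insert,
      Finset.mem_singleton, Fin.ext_iff, Fin.val_mk]
    omega
  rw [h]
  rw [Finset.card_pair (by simp [Fin.ext_iff])]

lemma card_ge2 : (Finset.univ.filter (fun i : Fin (p + 2) => ¬ i.val ≤ 1)).card = p := by
  have h := Finset.card_filter_add_card_filter_not
      (s := (Finset.univ : Finset (Fin (p + 2)))) (p := fun i => i.val ≤ 1)
  rw [card_le1] at h
  rw [Finset.card_univ, Fintype.card_fin] at h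
  omega

lemma udotu : uvec p ⬝ᵥ uvec p = 2 := by
  have h : uvec p ⬝ᵥ uvec p = ∑ i : Fin (p + 2), if i.val ≤ 1 then (1:ℝ) else 0 := by
    unfold dotProduct uvec
    exact Finset.sum_congr rfl fun i _ => by split <;> norm_num
  rw [h, Finset.sum_boole, card_le1]
  norm_num

lemma wdotw : wvec p ⬝ᵥ wvec p = p := by
  have h : wvec p ⬝ᵥ wvec p = ∑ i : Fin (p + 2), if ¬ i.val ≤ 1 then (1:ℝ) else 0 := by
    unfold dotProduct wvec
    exact Finset.sum_congr rfl fun i _ => by split <;> simp_all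
  rw [h, Finset.sum_boole, card_ge2]

lemma udotw : uvec p ⬝ᵥ wvec p = 0 := by
  unfold dotProduct
  exact Finset.sum_eq_zero fun i _ => by simp only [uvec, wvec]; split <;> norm_num

lemma wdotu : wvec p ⬝ᵥ uvec p = 0 := by
  unfold dotProduct
  exact Finset.sum_eq_zero fun i _ => by simp only [uvec, wvec]; split <;> norm_num

/-! ### The multiplication table -/

section table
variable (p)

lemma tPP : diagonal (uvec p) * diagonal (uvec p) = diagonal (uvec p) := by
  rw [diagonal_mul_diagonal]
  have h : (fun i => uvec p i * uvec p i) = uvec p := by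
    funext i; simp only [uvec]; split <;> norm_num
  rw [h]

lemma tPX : diagonal (uvec p) * vecMulVec (uvec p) (wvec p) = vecMulVec (uvec p) (wvec p) := by
  ext i j
  simp only [diagonal_mul, mul_diagonal, diagonal_apply, vecMulVec_apply, Matrix.zero_apply, uvec, wvec]
  split_ifs <;> norm_num

lemma tPY : diagonal (uvec p) * vecMulVec (wvec p) (uvec p) = 0 := by
  ext i j
  simp only [diagonal_mul, mul_diagonal, diagonal_apply, vecMulVec_apply, Matrix.zero_apply, uvec, wvec]
  split_ifs <;> norm_num

lemma tPE : diagonal (uvec p) * vecMulVec (uvec p) (uvec p) = vecMulVec (uvec p) (uvec p) := by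
  ext i j
  simp only [diagonal_mul, mul_diagonal, diagonal_apply, vecMulVec_apply, Matrix.zero_apply, uvec, wvec]
  split_ifs <;> norm_num

lemma tPF : diagonal (uvec p) * vecMulVec (wvec p) (wvec p) = 0 := by
  ext i j
  simp only [diagonal_mul, mul_diagonal, diagonal_apply, vecMulVec_apply, Matrix.zero_apply, uvec, wvec]
  split_ifs <;> norm_num

lemma tXP : vecMulVec (uvec p) (wvec p) * diagonal (uvec p) = 0 := by
  ext i j
  simp only [diagonal_mul, mul_diagonal, diagonal_apply, vecMulVec_apply, Matrix.zero_apply, uvec, wvec]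
  split_ifs <;> norm_num

lemma tYP : vecMulVec (wvec p) (uvec p) * diagonal (uvec p) = vecMulVec (wvec p) (uvec p) := by
  ext i j
  simp only [diagonal_mul, mul_diagonal, diagonal_apply, vecMulVec_apply, Matrix.zero_apply, uvec, wvec]
  split_ifs <;> norm_num

lemma tEP : vecMulVec (uvec p) (uvec p) * diagonal (uvec p) = vecMulVec (uvec p) (uvec p) := by
  ext i j
  simp only [diagonal_mul, mul_diagonal, diagonal_apply, vecMulVec_apply, Matrix.zero_apply, uvec, wvec]
  split_ifs <;> norm_num

lemma tFP : vecMulVec (wvec p) (wvec p) * diagonal (uvec p) = 0 := by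
  ext i j
  simp only [diagonal_mul, mul_diagonal, diagonal_apply, vecMulVec_apply, Matrix.zero_apply, uvec, wvec]
  split_ifs <;> norm_num

lemma tPu : diagonal (uvec p) *ᵥ uvec p = uvec p := by
  funext i
  rw [mulVec_diagonal]
  simp only [uvec]
  split <;> norm_num

lemma tPw : diagonal (uvec p) *ᵥ wvec p = 0 := by
  funext i
  rw [mulVec_diagonal]
  simp only [uvec, wvec]
  split <;> norm_num

end table

/-! ### Degrees and the structure of `Q` -/

lemma K2p_adj_iff (a b : Fin (p + 2)) :
    (K2p p).Adj a b ↔ (a.val ≤ 1 ∧ 2 ≤ b.val) ∨ (b.val ≤ 1 ∧ 2 ≤ a.val) := Iff.rfl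

lemma degree_K2p (x : Fin (p + 2)) :
    (K2p p).degree x = if x.val ≤ 1 then p else 2 := by
  have hnb : (K2p p).neighborFinset x = Finset.univ.filter (fun b => (K2p p).Adj x b) := by
    ext b; simp [SimpleGraph.mem_neighborFinset]
  rw [SimpleGraph.degree, hnb]
  by_cases h : x.val ≤ 1
  · rw [if_pos h]
    have he : Finset.univ.filter (fun b => (K2p p).Adj x b)
        = Finset.univ.filter (fun b : Fin (p + 2) => ¬ b.val ≤ 1) := by
      apply Finset.filter_congr
      intro b _
      simp only [K2p_adj_iff]
      constructor
      · intro hb; omega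
      · intro hb; omega
    rw [he, card_ge2]
  · rw [if_neg h]
    have he : Finset.univ.filter (fun b => (K2p p).Adj x b)
        = Finset.univ.filter (fun b : Fin (p + 2) => b.val ≤ 1) := by
      apply Finset.filter_congr
      intro b _
      simp only [K2p_adj_iff]
      constructor
      · intro hb; omega
      · intro hb; omega
    rw [he, card_le1]

lemma Q_eq : sLapMatrix (K2p p) =
    (2:ℝ) • (1 : Matrix (Fin (p + 2)) (Fin (p + 2)) ℝ)
      + ((p:ℝ) - 2) • diagonal (uvec p)
      + vecMulVec (uvec p) (wvec p) + vecMulVec (wvec p) (uvec p) := by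
  ext i j
  simp only [sLapMatrix, SimpleGraph.degMatrix, Matrix.add_apply, Matrix.smul_apply, one_apply,
    diagonal_apply, SimpleGraph.adjMatrix_apply, vecMulVec_apply, smul_eq_mul,
    uvec, wvec, K2p_adj_iff]
  by_cases hij : i = j
  · subst hij
    have hno : ¬ ((i.val ≤ 1 ∧ 2 ≤ i.val) ∨ (i.val ≤ 1 ∧ 2 ≤ i.val)) := by omega
    rw [if_neg hno, degree_K2p]
    by_cases h : i.val ≤ 1 <;> simp [h]
    try ring
  · simp only [if_neg hij]
    by_cases h1 : i.val ≤ 1 <;> by_cases h2 : j.val ≤ 1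
    · rw [if_neg (by omega)]; simp [h1, h2]
    · rw [if_pos (by omega)]; simp [h1, h2]
    · rw [if_pos (by omega)]; simp [h1, h2]
    · rw [if_neg (by omega)]; simp [h1, h2]

lemma Q_herm : (sLapMatrix (K2p p)).IsHermitian := by
  show _ᴴ = _
  rw [Q_eq]
  simp only [conjTranspose_add, conjTranspose_smul, conjTranspose_one,
    diagonal_conjTranspose, vmv_conjT]
  have h1 : star ((2:ℝ)) = (2:ℝ) := by simp
  have h2 : star ((p:ℝ) - 2) = ((p:ℝ) - 2) := by simp
  have h3 : star (uvec p) = uvec p := by simp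
  rw [h1, h2, h3]
  abel

/-! ### The annihilating polynomial of `Q` -/

lemma hM1 : sLapMatrix (K2p p) * (sLapMatrix (K2p p) - (2:ℝ) • 1) =
    ((p:ℝ) * ((p:ℝ) - 2)) • diagonal (uvec p) + (p:ℝ) • vecMulVec (uvec p) (wvec p)
    + (p:ℝ) • vecMulVec (wvec p) (uvec p) + (p:ℝ) • vecMulVec (uvec p) (uvec p)
    + (2:ℝ) • vecMulVec (wvec p) (wvec p) := by
  rw [Q_eq]
  simp only [Matrix.mul_add, Matrix.add_mul, Matrix.sub_mul, Matrix.mul_sub,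
    Matrix.smul_mul, Matrix.mul_smul, Matrix.one_mul, Matrix.mul_one,
    tPP, tPX, tPY, tPE, tPF, tXP, tYP, tEP, tFP, vmv_mul_vmv,
    udotu, udotw, wdotu, wdotw, zero_smul, smul_zero, add_zero, zero_add,
    mul_zero, zero_mul]
  module

lemma hM2 : (((p:ℝ) * ((p:ℝ) - 2)) • diagonal (uvec p) + (p:ℝ) • vecMulVec (uvec p) (wvec p)
    + (p:ℝ) • vecMulVec (wvec p) (uvec p) + (p:ℝ) • vecMulVec (uvec p) (uvec p)
    + (2:ℝ) • vecMulVec (wvec p) (wvec p)) * (sLapMatrix (K2p p) - (p:ℝ) • 1) =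
    ((p:ℝ)^2) • vecMulVec (uvec p) (uvec p) + (2*(p:ℝ)) • vecMulVec (uvec p) (wvec p)
    + (2*(p:ℝ)) • vecMulVec (wvec p) (uvec p) + (4:ℝ) • vecMulVec (wvec p) (wvec p) := by
  rw [Q_eq]
  simp only [Matrix.mul_add, Matrix.add_mul, Matrix.sub_mul, Matrix.mul_sub,
    Matrix.smul_mul, Matrix.mul_smul, Matrix.one_mul, Matrix.mul_one,
    tPP, tPX, tPY, tPE, tPF, tXP, tYP, tEP, tFP, vmv_mul_vmv,
    udotu, udotw, wdotu, wdotw, zero_smul, smul_zero, add_zero, zero_add,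
    mul_zero, zero_mul]
  module

lemma hM3 : (((p:ℝ)^2) • vecMulVec (uvec p) (uvec p) + (2*(p:ℝ)) • vecMulVec (uvec p) (wvec p)
    + (2*(p:ℝ)) • vecMulVec (wvec p) (uvec p) + (4:ℝ) • vecMulVec (wvec p) (wvec p))
    * (sLapMatrix (K2p p) - ((p:ℝ) + 2) • 1) = 0 := by
  rw [Q_eq]
  simp only [Matrix.mul_add, Matrix.add_mul, Matrix.sub_mul, Matrix.mul_sub,
    Matrix.smul_mul, Matrix.mul_smul, Matrix.one_mul, Matrix.mul_one,
    tPP, tPX, tPY, tPE, tPF, tXP, tYP, tEP, tFP, vmv_mul_vmv,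
    udotu, udotw, wdotu, wdotw, zero_smul, smul_zero, add_zero, zero_add,
    mul_zero, zero_mul]
  module

lemma quartic0 : ((sLapMatrix (K2p p) * (sLapMatrix (K2p p) - (2:ℝ) • 1))
    * (sLapMatrix (K2p p) - (p:ℝ) • 1)) * (sLapMatrix (K2p p) - ((p:ℝ) + 2) • 1) = 0 := by
  rw [hM1, hM2, hM3]

/-! ### Eigenvalue membership -/

lemma eig_mem (hA : (sLapMatrix (K2p p)).IsHermitian) (i : Fin (p + 2)) :
    hA.eigenvalues i = 0 ∨ hA.eigenvalues i = 2 ∨ hA.eigenvalues i = p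
      ∨ hA.eigenvalues i = (p:ℝ) + 2 := by
  set Q := sLapMatrix (K2p p) with hQ
  set μ := hA.eigenvalues i with hμ
  set z : Fin (p + 2) → ℝ := ⇑(hA.eigenvectorBasis i) with hz
  have hz0 : z ≠ 0 := by
    intro h
    apply hA.eigenvectorBasis.orthonormal.ne_zero i
    ext k
    exact congrFun h k
  have heig : Q *ᵥ z = μ • z := hA.mulVec_eigenvectorBasis i
  have step : ∀ c : ℝ, (Q - c • 1) *ᵥ z = (μ - c) • z := by
    intro c
    rw [sub_mulVec, smul_mulVec, one_mulVec, heig, ← sub_smul]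
  have h1 : (((Q * (Q - (2:ℝ) • 1)) * (Q - (p:ℝ) • 1)) * (Q - ((p:ℝ) + 2) • 1)) *ᵥ z
      = ((μ - ((p:ℝ) + 2)) * ((μ - (p:ℝ)) * ((μ - 2) * μ))) • z := by
    rw [← mulVec_mulVec, step, mulVec_smul, ← mulVec_mulVec, step, mulVec_smul,
      ← mulVec_mulVec, step, mulVec_smul, heig]
    simp only [smul_smul]
  rw [quartic0, zero_mulVec] at h1
  have hs : (μ - ((p:ℝ) + 2)) * ((μ - (p:ℝ)) * ((μ - 2) * μ)) = 0 := by
    rcases smul_eq_zero.mp h1.symm with h | h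
    · exact h
    · exact absurd h hz0
  rcases mul_eq_zero.mp hs with h | h
  · exact Or.inr (Or.inr (Or.inr (by linarith [sub_eq_zero.mp h])))
  rcases mul_eq_zero.mp h with h | h
  · exact Or.inr (Or.inr (Or.inl (sub_eq_zero.mp h)))
  rcases mul_eq_zero.mp h with h | h
  · exact Or.inr (Or.inl (sub_eq_zero.mp h))
  · exact Or.inl h

/-! ### Explicit eigenvectors for `p + 2` and `p` -/

lemma eig_big (hp : 2 ≤ p) (hA : (sLapMatrix (K2p p)).IsHermitian) :
    ∃ i, hA.eigenvalues i = (p:ℝ) + 2 := by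
  apply exists_eig_index hA (x := (p:ℝ) • uvec p + (2:ℝ) • wvec p)
  · intro h
    have h0 := congrFun h ⟨0, by omega⟩
    simp only [Pi.add_apply, Pi.smul_apply, smul_eq_mul, uvec, wvec, Pi.zero_apply] at h0
    norm_num at h0
    have : (2:ℝ) ≤ (p:ℝ) := by exact_mod_cast hp
    linarith
  · rw [Q_eq]
    simp only [add_mulVec, smul_mulVec, one_mulVec, vmv_mulVec, mulVec_add, mulVec_smul,
      tPu, tPw, dotProduct_add, dotProduct_smul, udotu, udotw, wdotu, wdotw, smul_eq_mul,
      smul_zero, add_zero, zero_add, mul_zero, zero_mul]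
    module

lemma eig_mid (hA : (sLapMatrix (K2p p)).IsHermitian) :
    ∃ i, hA.eigenvalues i = (p:ℝ) := by
  set x : Fin (p + 2) → ℝ :=
      Pi.single (⟨0, by omega⟩ : Fin (p + 2)) (1:ℝ)
        - Pi.single (⟨1, by omega⟩ : Fin (p + 2)) (1:ℝ) with hx
  apply exists_eig_index hA (x := x)
  · intro h
    have h0 := congrFun h ⟨0, by omega⟩
    simp only [hx, Pi.sub_apply, Pi.zero_apply] at h0
    rw [Pi.single_eq_same, Pi.single_eq_of_ne (by simp [Fin.ext_iff])] at h0
    norm_num at h0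
  · have hdiag : ∀ (j : Fin (p + 2)) (c : ℝ),
        diagonal (uvec p) *ᵥ Pi.single j c = Pi.single j (uvec p j * c) := by
      intro j c
      funext k
      rw [mulVec_diagonal]
      by_cases hk : k = j
      · subst hk; simp
      · simp [Pi.single_eq_of_ne hk]
    have hdot : ∀ (a : Fin (p + 2) → ℝ) (j : Fin (p + 2)) (c : ℝ),
        a ⬝ᵥ Pi.single j c = a j * c := by
      intro a j c
      simp [dotProduct, Pi.single_apply, Finset.sum_ite_eq]
    rw [Q_eq, hx]
    simp only [add_mulVec, smul_mulVec, one_mulVec, vmv_mulVec, mulVec_sub, mulVec_smul,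
      hdiag, dotProduct_sub, hdot]
    have hu0 : uvec p ⟨0, by omega⟩ = 1 := by simp [uvec]
    have hu1 : uvec p ⟨1, by omega⟩ = 1 := by simp [uvec]
    have hw0 : wvec p ⟨0, by omega⟩ = 0 := by simp [wvec]
    have hw1 : wvec p ⟨1, by omega⟩ = 0 := by simp [wvec]
    rw [hu0, hu1, hw0, hw1]
    simp only [one_mul, zero_mul, sub_self, zero_smul, smul_zero, add_zero]
    module

/-! ### Trace computations -/

lemma trace_Q : (sLapMatrix (K2p p)).trace = 4 * (p:ℝ) := by
  rw [Q_eq]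
  simp only [trace_add, trace_smul, Matrix.trace_one, trace_diagonal, trace_vmv,
    udotw, wdotu, smul_eq_mul]
  have h1 : ∑ i, uvec p i = (2:ℝ) := by
    simp only [uvec]
    rw [Finset.sum_boole, card_le1]
    norm_num
  rw [h1, Fintype.card_fin]
  push_cast
  ring

lemma trace_QQ : (sLapMatrix (K2p p) * sLapMatrix (K2p p)).trace
    = 2 * (p:ℝ)^2 + 8 * (p:ℝ) := by
  have hsplit : sLapMatrix (K2p p) * sLapMatrix (K2p p)
      = sLapMatrix (K2p p) * (sLapMatrix (K2p p) - (2:ℝ) • 1) + (2:ℝ) • sLapMatrix (K2p p) := by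
    rw [Matrix.mul_sub, Matrix.mul_smul, Matrix.mul_one]
    abel
  rw [hsplit, trace_add, trace_smul, hM1, trace_Q]
  simp only [trace_add, trace_smul, trace_diagonal, trace_vmv,
    udotu, udotw, wdotu, wdotw, smul_eq_mul]
  have h1 : ∑ i, uvec p i = (2:ℝ) := by
    simp only [uvec]
    rw [Finset.sum_boole, card_le1]
    norm_num
  rw [h1]
  ring

lemma fin_zero_le {n : ℕ} (k : Fin (n + 2)) : (⟨0, by omega⟩ : Fin (n + 2)) ≤ k := by
  rw [Fin.le_def]
  exact Nat.zero_le _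

lemma fin_one_le {n : ℕ} (k : Fin (n + 2)) (h : k ≠ ⟨0, by omega⟩) :
    (⟨1, by omega⟩ : Fin (n + 2)) ≤ k := by
  rw [Fin.le_def]
  have hv : k.val ≠ 0 := fun hv => h (Fin.ext hv)
  show 1 ≤ k.val
  omega

end K2B

theorem K2p_sum_two_largest {p : ℕ} (hp : 2 ≤ p)
    (q : Fin (p + 2) → ℝ) (hq : IsEigSeq (sLapMatrix (K2p p)) q)
    (d : Fin (p + 2) → ℕ) (hd : IsDegSeq (K2p p) d) :
    q ⟨0, by omega⟩ + q ⟨1, by omega⟩ = 2 * (p : ℝ) + 2 ∧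
    2 * (p : ℝ) + 2 > 2 * (p : ℝ) + 1 ∧
    (d ⟨0, by omega⟩ : ℝ) + (d ⟨1, by omega⟩ : ℝ) + 1 = 2 * (p : ℝ) + 1 := by
  obtain ⟨hanti, hA, σ, hqσ⟩ := hq
  obtain ⟨hdanti, τ, hdτ⟩ := hd
  have hpR : (2:ℝ) ≤ (p:ℝ) := by exact_mod_cast hp
  set i0 : Fin (p + 2) := ⟨0, by omega⟩ with hi0
  set i1 : Fin (p + 2) := ⟨1, by omega⟩ with hi1
  -- membership of each q i
  have qmem : ∀ i, q i = 0 ∨ q i = 2 ∨ q i = (p:ℝ) ∨ q i = (p:ℝ) + 2 := by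
    intro i
    rw [hqσ]
    exact K2B.eig_mem hA (σ i)
  -- sum of squares
  have hsumsq : ∑ i, q i ^ 2 = 2 * (p:ℝ)^2 + 8 * (p:ℝ) := by
    have h1 : ∑ i, q i ^ 2 = ∑ i, hA.eigenvalues (σ i) ^ 2 := by
      exact Finset.sum_congr rfl fun i _ => by rw [hqσ]
    rw [h1, Equiv.sum_comp σ (fun j => hA.eigenvalues j ^ 2),
      K2B.sum_sq_eigenvalues hA, K2B.trace_QQ]
  -- q i0 = p + 2
  have hq0 : q i0 = (p:ℝ) + 2 := by
    obtain ⟨k, hk⟩ := K2B.eig_big hp hA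
    have hk' : q (σ.symm k) = (p:ℝ) + 2 := by
      rw [hqσ, Equiv.apply_symm_apply, hk]
    have hge : (p:ℝ) + 2 ≤ q i0 := by
      rw [← hk']
      exact hanti (K2B.fin_zero_le _)
    have hle : q i0 ≤ (p:ℝ) + 2 := by
      rcases qmem i0 with h | h | h | h <;> rw [h] <;> linarith
    linarith
  -- q i1 ≥ p
  have hq1ge : (p:ℝ) ≤ q i1 := by
    obtain ⟨k, hk⟩ := K2B.eig_mid hA
    have hk' : q (σ.symm k) = (p:ℝ) := by
      rw [hqσ, Equiv.apply_symm_apply, hk]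
    by_cases hc : σ.symm k = i0
    · rw [hc, hq0] at hk'
      linarith
    · have h1k : i1 ≤ σ.symm k := K2B.fin_one_le _ hc
      rw [← hk']
      exact hanti h1k
  -- q i1 ≤ p
  have hq1le : q i1 ≤ (p:ℝ) := by
    by_contra hgt
    push_neg at hgt
    have hq1 : q i1 = (p:ℝ) + 2 := by
      rcases qmem i1 with h | h | h | h
      · rw [h] at hgt; linarith
      · rw [h] at hgt; linarith
      · rw [h] at hgt; linarith
      · exact h
    have hne : i0 ≠ i1 := by simp [hi0, hi1, Fin.ext_iff]
    have hsub : ({i0, i1} : Finset (Fin (p + 2))) ⊆ Finset.univ := Finset.subset_univ _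
    have hpair : ∑ i ∈ ({i0, i1} : Finset (Fin (p + 2))), q i ^ 2 = q i0 ^ 2 + q i1 ^ 2 :=
      Finset.sum_pair hne
    have hbound : ∑ i ∈ ({i0, i1} : Finset (Fin (p + 2))), q i ^ 2 ≤ ∑ i, q i ^ 2 :=
      Finset.sum_le_sum_of_subset_of_nonneg hsub (fun i _ _ => sq_nonneg _)
    rw [hpair, hsumsq, hq0, hq1] at hbound
    nlinarith
  -- degrees
  have hdub : ∀ i, d i ≤ p := by
    intro i
    rw [hdτ, K2B.degree_K2p]
    split
    · exact le_refl p
    · exact hp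
  have hd0 : d i0 = p := by
    have hk : d (τ.symm i0) = p := by
      rw [hdτ, Equiv.apply_symm_apply, K2B.degree_K2p]
      simp [hi0]
    have : p ≤ d i0 := by
      rw [← hk]
      exact hdanti (K2B.fin_zero_le _)
    exact le_antisymm (hdub i0) this
  have hd1 : d i1 = p := by
    have hk0 : d (τ.symm i0) = p := by
      rw [hdτ, Equiv.apply_symm_apply, K2B.degree_K2p]
      simp [hi0]
    have hk1 : d (τ.symm i1) = p := by
      rw [hdτ, Equiv.apply_symm_apply, K2B.degree_K2p]
      simp [hi1]
    have hne : τ.symm i0 ≠ τ.symm i1 := by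
      intro h
      have := τ.symm.injective h
      simp [hi0, hi1, Fin.ext_iff] at this
    have hge : p ≤ d i1 := by
      by_cases hc : τ.symm i0 = i0
      · have h1k : i1 ≤ τ.symm i1 := by
          apply K2B.fin_one_le
          intro h
          apply hne
          rw [hc]
          exact h.symm
        rw [← hk1]
        exact hdanti h1k
      · have h1k : i1 ≤ τ.symm i0 := K2B.fin_one_le _ hc
        rw [← hk0]
        exact hdanti h1k
    exact le_antisymm (hdub i1) hge
  refine ⟨?_, by linarith, ?_⟩
  · show q i0 + q i1 = 2 * (p:ℝ) + 2
    rw [hq0, le_antisymm hq1le hq1ge]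
    ring
  · show (d i0 : ℝ) + (d i1 : ℝ) + 1 = 2 * (p:ℝ) + 1
    rw [hd0, hd1]
    ring
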